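/- arXiv:1903.04327 — 2 statements merged into one kernel-verified Lean document; each statement's English description precedes it below -/
import Mathlib

section
/- Let ĉ: Q̂ → Q be the universal abelian covering of a quiver Q and let M̂ be a finite-dimensional representation of Q̂ whose pushdown M = ĉ(M̂) satisfies Ext¹_Q(M,M) = 0. Then Ext¹_{Q̂}(M̂,M̂) = 0, i.e. rigidity lifts to the cover. -/
/-- A quiver: a set of vertices, a set of arrows, and source/target maps. -/
structure Quiv where
  V : Type
  A : Type
  s : A → V
  t : A → V

/-- A representation of the quiver `Q` over the field `k`: a vector space for every
vertex and a linear map for every arrow. -/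
structure QRep (k : Type) [Field k] (Q : Quiv) where
  carrier : Q.V → Type
  [acg : ∀ i, AddCommGroup (carrier i)]
  [mod : ∀ i, Module k (carrier i)]
  map : ∀ a : Q.A, carrier (Q.s a) →ₗ[k] carrier (Q.t a)

attribute [instance] QRep.acg QRep.mod

namespace QRep

variable {k : Type} [Field k] {Q : Quiv}

/-- The space `Hom_Q(M,N)` of morphisms of representations, realized as a subspace of
`⊕_{i ∈ Q₀} Hom_k(M_i, N_i)`. -/
def homSet (M N : QRep k Q) : Submodule k (∀ i, M.carrier i →ₗ[k] N.carrier i) where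
  carrier := {f | ∀ a : Q.A, N.map a ∘ₗ f (Q.s a) = f (Q.t a) ∘ₗ M.map a}
  add_mem' := by
    intro f g hf hg a
    simp only [Pi.add_apply, LinearMap.comp_add, LinearMap.add_comp, hf a, hg a]
  zero_mem' := by intro a; simp
  smul_mem' := by
    intro c f hf a
    simp only [Pi.smul_apply, LinearMap.comp_smul, LinearMap.smul_comp, hf a]

/-- The map `φ : ⊕_i Hom(M_i,N_i) → ⊕_{α} Hom(M_{s(α)}, N_{t(α)})`,
`φ((f_i)_i) = (N_α ∘ f_{s(α)} − f_{t(α)} ∘ M_α)_α`, arising from the standard projective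
resolution of `M`. -/
def extMap (M N : QRep k Q) :
    (∀ i, M.carrier i →ₗ[k] N.carrier i) →ₗ[k]
      (∀ a : Q.A, M.carrier (Q.s a) →ₗ[k] N.carrier (Q.t a)) where
  toFun f := fun a => N.map a ∘ₗ f (Q.s a) - f (Q.t a) ∘ₗ M.map a
  map_add' f g := by
    funext a
    simp only [Pi.add_apply, LinearMap.comp_add, LinearMap.add_comp]
    abel
  map_smul' c f := by
    funext a
    simp only [Pi.smul_apply, LinearMap.comp_smul, LinearMap.smul_comp, RingHom.id_apply,
      smul_sub]

/-- The extension group `Ext¹_Q(M,N)`, realized as the cokernel of `extMap M N`;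
by the standard projective resolution of `M` this is the first extension group in the
category of representations of `Q`. -/
def Ext1 (M N : QRep k Q) :=
  (∀ a : Q.A, M.carrier (Q.s a) →ₗ[k] N.carrier (Q.t a)) ⧸ LinearMap.range (extMap M N)

noncomputable instance (M N : QRep k Q) : AddCommGroup (Ext1 M N) :=
  inferInstanceAs (AddCommGroup ((∀ _a : Q.A, _ →ₗ[k] _) ⧸ LinearMap.range (extMap M N)))

noncomputable instance (M N : QRep k Q) : Module k (Ext1 M N) :=
  inferInstanceAs (Module k ((∀ _a : Q.A, _ →ₗ[k] _) ⧸ LinearMap.range (extMap M N)))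

end QRep

open scoped Classical in
/-- The universal abelian covering quiver of `Q`: vertices `Q₀ × ℤ^{Q₁}`,
arrows `Q₁ × ℤ^{Q₁}`, where the arrow `(α, χ)` goes from `(s α, χ)` to `(t α, χ + α)`. -/
noncomputable def Quiv.hat (Q : Quiv) : Quiv where
  V := Q.V × (Q.A →₀ ℤ)
  A := Q.A × (Q.A →₀ ℤ)
  s := fun p => (Q.s p.1, p.2)
  t := fun p => (Q.t p.1, p.2 + Finsupp.single p.1 1)

attribute [reducible] Quiv.hat

namespace QRep

open scoped Classical DirectSum

variable {k : Type} [Field k] {Q : Quiv}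

/-- The pushdown functor along `ĉ : Q̂ → Q`: `ĉ(N̂)_i = ⊕_χ N̂_{i,χ}` with the map over
an arrow `α` acting componentwise via the maps `N̂_{(α,χ)} : N̂_{s(α),χ} → N̂_{t(α),χ+α}`. -/
noncomputable def pushdown (Mh : QRep k Q.hat) : QRep k Q where
  carrier i := ⨁ χ : (Q.A →₀ ℤ), Mh.carrier (i, χ)
  map a := DirectSum.toModule k _ _ fun χ =>
    (DirectSum.lof k (Q.A →₀ ℤ) (fun χ' => Mh.carrier (Q.t a, χ')) (χ + Finsupp.single a 1))
      ∘ₗ Mh.map (a, χ)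

/-- The shift functor `S_ξ` on representations of `Q̂`:
`S_ξ(M̂)_{i,χ} = M̂_{i,χ+ξ}` and `S_ξ(M̂)_{(α,χ)} = M̂_{(α,χ+ξ)}`. -/
noncomputable def shift (ξ : Q.A →₀ ℤ) (Mh : QRep k Q.hat) : QRep k Q.hat where
  carrier v := Mh.carrier (v.1, v.2 + ξ)
  map a := by
    have h : (Q.t a.1, a.2 + ξ + Finsupp.single a.1 1)
        = (Q.t a.1, a.2 + Finsupp.single a.1 1 + ξ) := by
      rw [add_right_comm]
    exact (h ▸ Mh.map (a.1, a.2 + ξ) :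
      Mh.carrier (Q.s a.1, a.2 + ξ) →ₗ[k] Mh.carrier (Q.t a.1, a.2 + Finsupp.single a.1 1 + ξ))

end QRep

open QRep in
lemma pushdown_component_aux {k : Type} [Field k] {Q : Quiv} (Mh : QRep k Q.hat)
    (a : Q.A) (χ : Q.A →₀ ℤ) (y : (pushdown Mh).carrier (Q.s a)) :
    DirectSum.component k (Q.A →₀ ℤ) (fun χ' => Mh.carrier (Q.t a, χ'))
        (χ + Finsupp.single a 1) ((pushdown Mh).map a y)
      = Mh.map (a, χ)
        (DirectSum.component k (Q.A →₀ ℤ) (fun χ' => Mh.carrier (Q.s a, χ')) χ y) := by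
  classical
  show DirectSum.component k (Q.A →₀ ℤ) (fun χ' => Mh.carrier (Q.t a, χ')) (χ + Finsupp.single a 1)
    (DirectSum.toModule k (Q.A →₀ ℤ) (DirectSum (Q.A →₀ ℤ) fun χ'' => Mh.carrier (Q.t a, χ'')) (fun χ'' =>
      (DirectSum.lof k (Q.A →₀ ℤ) (fun χ' => Mh.carrier (Q.t a, χ')) (χ'' + Finsupp.single a 1))
        ∘ₗ Mh.map (a, χ'')) y) = _
  induction y using DirectSum.induction_on with
  | zero => simp
  | of χ' x =>
    rw [← DirectSum.lof_eq_of k]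
    simp only [pushdown, DirectSum.toModule_lof]
    simp only [LinearMap.coe_comp, Function.comp_apply]
    rw [DirectSum.component.of, DirectSum.component.of]
    by_cases h : χ' = χ
    · subst h; simp
    · rw [dif_neg h, dif_neg (fun hc => h (add_right_cancel hc)), map_zero]
  | add u v hu hv => simp only [map_add, hu, hv]

open QRep in
/-- Let `ĉ : Q̂ → Q` be the universal abelian covering and `M̂` a
finite-dimensional representation of `Q̂` whose pushdown `M = ĉ(M̂)` satisfies
`Ext¹_Q(M,M) = 0`. Then `Ext¹_{Q̂}(M̂,M̂) = 0`: rigidity lifts to the cover. -/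
theorem stmt7 {k : Type} [Field k] [IsAlgClosed k] {Q : Quiv} (Mh : QRep k Q.hat)
    [∀ v, FiniteDimensional k (Mh.carrier v)]
    (S : Finset (Q.A →₀ ℤ))
    (hMS : ∀ (i : Q.V) (χ : Q.A →₀ ℤ), χ ∉ S → Subsingleton (Mh.carrier (i, χ)))
    (hrigid : Subsingleton (Ext1 (pushdown Mh) (pushdown Mh))) :
    Subsingleton (Ext1 Mh Mh) := by
  classical
  set P := pushdown Mh with hP
  have hsurj : Function.Surjective (extMap P P) := by
    rw [← LinearMap.range_eq_top]
    exact Submodule.Quotient.subsingleton_iff.mp hrigid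
  refine Submodule.Quotient.subsingleton_iff.mpr ?_
  rw [LinearMap.range_eq_top]
  intro g
  -- Assemble `g` into a map on the pushdown
  set G : ∀ a : Q.A, P.carrier (Q.s a) →ₗ[k] P.carrier (Q.t a) := fun a =>
    DirectSum.toModule k _ _ fun χ =>
      (DirectSum.lof k (Q.A →₀ ℤ) (fun χ' => Mh.carrier (Q.t a, χ')) (χ + Finsupp.single a 1))
        ∘ₗ g (a, χ) with hGdef
  obtain ⟨F, hF⟩ := hsurj G
  -- key computation: components of the pushdown map
  have key : ∀ (a : Q.A) (χ : Q.A →₀ ℤ) (y : P.carrier (Q.s a)),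
      DirectSum.component k (Q.A →₀ ℤ) (fun χ' => Mh.carrier (Q.t a, χ'))
          (χ + Finsupp.single a 1) (P.map a y)
        = Mh.map (a, χ)
          (DirectSum.component k (Q.A →₀ ℤ) (fun χ' => Mh.carrier (Q.s a, χ')) χ y) :=
    fun a χ y => pushdown_component_aux Mh a χ y
  refine ⟨fun v => DirectSum.component k (Q.A →₀ ℤ) (fun χ' => Mh.carrier (v.1, χ')) v.2
      ∘ₗ F v.1 ∘ₗ DirectSum.lof k (Q.A →₀ ℤ) (fun χ' => Mh.carrier (v.1, χ')) v.2, ?_⟩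
  funext a
  obtain ⟨α, χ⟩ := a
  ext x
  have h1 := congrFun hF α
  have h2 := congrArg (fun (φ : P.carrier (Q.s α) →ₗ[k] P.carrier (Q.t α)) =>
      DirectSum.component k (Q.A →₀ ℤ) (fun χ' => Mh.carrier (Q.t α, χ'))
        (χ + Finsupp.single α 1)
        (φ (DirectSum.lof k (Q.A →₀ ℤ) (fun χ' => Mh.carrier (Q.s α, χ')) χ x))) h1
  simp only [extMap, LinearMap.coe_mk, AddHom.coe_mk] at h2
  erw [LinearMap.sub_apply, map_sub] at h2
  change DirectSum.component k (Q.A →₀ ℤ) (fun χ' => Mh.carrier (Q.t α, χ')) (χ + Finsupp.single α 1)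
      (P.map α (F (Q.s α) (DirectSum.lof k (Q.A →₀ ℤ) (fun χ' => Mh.carrier (Q.s α, χ')) χ x)))
    - DirectSum.component k (Q.A →₀ ℤ) (fun χ' => Mh.carrier (Q.t α, χ')) (χ + Finsupp.single α 1)
      (F (Q.t α) (P.map α (DirectSum.lof k (Q.A →₀ ℤ) (fun χ' => Mh.carrier (Q.s α, χ')) χ x)))
    = _ at h2
  have hPmap : P.map α (DirectSum.lof k (Q.A →₀ ℤ) (fun χ'' => Mh.carrier (Q.s α, χ'')) χ x)
      = DirectSum.lof k (Q.A →₀ ℤ) (fun χ'' => Mh.carrier (Q.t α, χ''))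
          (χ + Finsupp.single α 1) (Mh.map (α, χ) x) :=
    DirectSum.toModule_lof (N := P.carrier (Q.t α)) k _ _
  have hGapp : G α (DirectSum.lof k (Q.A →₀ ℤ) (fun χ'' => Mh.carrier (Q.s α, χ'')) χ x)
      = DirectSum.lof k (Q.A →₀ ℤ) (fun χ'' => Mh.carrier (Q.t α, χ''))
          (χ + Finsupp.single α 1) (g (α, χ) x) :=
    DirectSum.toModule_lof (N := P.carrier (Q.t α)) k _ _
  erw [hPmap, hGapp, DirectSum.component.lof_self, key α χ] at h2
  exact h2
end

section
/- Let Q be a quiver, l a sink of Q adjacent to exactly one arrow β: k → l, and M a representation of Q. For a dimension vector e, let e' be its restriction away from l and M' the restriction of M to the full subquiver on Q₀ ∖ {l}. Then the map p_l: Gr_e(M) → Gr_{e'}(M'), U ↦ (U_i)_{i≠l}, is well-defined, and for any subrepresentation U' ∈ Gr_{e'}(M'), the fiber p_l⁻¹(U') is in bijection with the set {W ∈ Gr_{e_l}(M_l) : M_β(U'_k) ⊆ W} of e_l-dimensional subspaces of M_l containing M_β(U'_k). -/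
namespace QRep

variable {k : Type} [Field k] {Q : Quiv}

/-- A family of subspaces `U_i ⊆ M_i` is a subrepresentation if
`M_α(U_{s(α)}) ⊆ U_{t(α)}` for every arrow `α`. -/
def IsSubrep (M : QRep k Q) (U : ∀ i, Submodule k (M.carrier i)) : Prop :=
  ∀ a : Q.A, (U (Q.s a)).map (M.map a) ≤ U (Q.t a)

/-- The set of points of the quiver Grassmannian `Gr_e(M)`: subrepresentations of `M`
of dimension vector `e`. -/
def GrSet (M : QRep k Q) (e : Q.V → ℕ) :=
  {U : ∀ i, Submodule k (M.carrier i) //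
    M.IsSubrep U ∧ ∀ i, Module.finrank k (U i) = e i}

end QRep

/-- The full subquiver of `Q` on the complement of the vertex `l`: its arrows are the
arrows of `Q` with both endpoints different from `l`. -/
def Quiv.deleteVertex (Q : Quiv) (l : Q.V) : Quiv where
  V := {v : Q.V // v ≠ l}
  A := {a : Q.A // Q.s a ≠ l ∧ Q.t a ≠ l}
  s := fun a => ⟨Q.s a.1, a.2.1⟩
  t := fun a => ⟨Q.t a.1, a.2.2⟩

/-- The restriction `M'` of a representation `M` of `Q` to the full subquiver obtained
by deleting the vertex `l`. -/
def QRep.restrict {k : Type} [Field k] {Q : Quiv} (M : QRep k Q) (l : Q.V) :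
    QRep k (Q.deleteVertex l) where
  carrier v := M.carrier v.1
  map a := M.map a.1

open QRep in
/-- Let `Q` be a quiver, `l` a sink of `Q` adjacent to exactly one
arrow `β : κ → l` (here `l = Q.t β`), `M` a representation of `Q`, `e` a dimension
vector with restriction `e'` away from `l`, and `M'` the restriction of `M` to the full
subquiver on `Q₀ ∖ {l}`.  Then the forgetful map
`p_l : Gr_e(M) → Gr_{e'}(M')`, `U ↦ (U_i)_{i ≠ l}`, is well-defined, and for every
`U' ∈ Gr_{e'}(M')` the fiber `p_l⁻¹(U')` is in bijection with the set of
`e_l`-dimensional subspaces `W ⊆ M_l` with `M_β(U'_κ) ⊆ W`. -/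
theorem stmt17 {k : Type} [Field k] [IsAlgClosed k] {Q : Quiv} (β : Q.A)
    (hsink : ∀ a : Q.A, Q.s a ≠ Q.t β)
    (hleaf : ∀ a : Q.A, Q.t a = Q.t β → a = β)
    (M : QRep k Q) [∀ i, FiniteDimensional k (M.carrier i)] (e : Q.V → ℕ) :
    -- `p_l` is well-defined: the restriction of a subrepresentation of dimension
    -- vector `e` is a subrepresentation of `M'` of dimension vector `e'`
    (∀ U : GrSet M e,
      (M.restrict (Q.t β)).IsSubrep (fun v => U.1 v.1) ∧
        ∀ v : (Q.deleteVertex (Q.t β)).V, Module.finrank k (U.1 v.1) = e v.1) ∧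
    -- fiber description: for every `U' ∈ Gr_{e'}(M')`, the fiber of `p_l` over `U'`
    -- is in bijection with `{W ∈ Gr_{e_l}(M_l) : M_β(U'_κ) ⊆ W}`
    (∀ U' : GrSet (M.restrict (Q.t β)) (fun v => e v.1),
      Nonempty
        ({U : GrSet M e // ∀ v : (Q.deleteVertex (Q.t β)).V, U.1 v.1 = U'.1 v} ≃
          {W : Submodule k (M.carrier (Q.t β)) //
            Module.finrank k W = e (Q.t β) ∧
              (U'.1 ⟨Q.s β, hsink β⟩).map (M.map β) ≤ W})) := by
  constructor
  · intro U
    refine ⟨fun a => U.2.1 a.1, fun v => U.2.2 v.1⟩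
  · intro U'
    classical
    refine ⟨{
      toFun := fun U => ⟨U.1.1 (Q.t β), U.1.2.2 (Q.t β), by
        have := U.1.2.1 β
        rwa [U.2 ⟨Q.s β, hsink β⟩] at this⟩
      invFun := fun W => ⟨⟨fun i => if h : i = Q.t β then h ▸ W.1 else U'.1 ⟨i, h⟩,
        ?_, ?_⟩, ?_⟩
      left_inv := ?_
      right_inv := ?_ }⟩
    · -- subrep
      intro a
      by_cases h : Q.t a = Q.t β
      · rcases hleaf a h with rfl
        dsimp only
        refine (Submodule.map_mono (le_of_eq (dif_neg (hsink a)))).trans (le_of_le_of_eq ?_ (dif_pos rfl).symm)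
        exact W.2.2
      · refine (Submodule.map_mono (le_of_eq (dif_neg (hsink a)))).trans (le_of_le_of_eq ?_ (dif_neg h).symm)
        exact U'.2.1 ⟨a, hsink a, h⟩
    · -- dims
      intro i
      by_cases h : i = Q.t β
      · subst h
        dsimp only
        refine (congrArg (fun S : Submodule k (M.carrier (Q.t β)) => Module.finrank k S) (dif_pos rfl)).trans ?_
        exact W.2.1
      · dsimp only
        refine (congrArg (fun S : Submodule k (M.carrier i) => Module.finrank k S) (dif_neg h)).trans ?_
        exact U'.2.2 ⟨i, h⟩
    · -- fiber condition
      intro v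
      dsimp only
      refine (dif_neg v.2).trans ?_
      rfl
    · -- left_inv
      intro U
      apply Subtype.ext
      apply Subtype.ext
      funext i
      by_cases h : i = Q.t β
      · subst h
        exact dif_pos rfl
      · dsimp only
        refine (dif_neg h).trans ?_
        exact (U.2 ⟨i, h⟩).symm
    · -- right_inv
      intro W
      apply Subtype.ext
      exact dif_pos rfl
end
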